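/- Under the update P(z_k - z_{k+1}) ∈ F(z_{k+1}) with P symmetric positive definite, F monotone, and 0 ∈ F(z_*), the IDS satisfies dist²_{P^{-1}}(0, F(z_k)) ≤ (1/k)‖z_0 - z_*‖²_P for all k ≥ 1. -/

import Mathlib

open Matrix

/-- Quadratic form `⟨v, G v⟩`. -/
def qf {ι : Type*} [Fintype ι] (G : Matrix ι ι ℝ) (v : ι → ℝ) : ℝ := v ⬝ᵥ G.mulVec v

/-- Squared distance (in the quadratic form of `G`) from `0` to a set `S`. -/
noncomputable def distSqTo {ι : Type*} [Fintype ι] (G : Matrix ι ι ℝ)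
    (S : Set (ι → ℝ)) : ℝ := sInf (qf G '' S)

theorem stmt6 {d : ℕ} (P : Matrix (Fin d) (Fin d) ℝ) (hP : P.PosDef)
    (F : (Fin d → ℝ) → Set (Fin d → ℝ))
    (hmono : ∀ z z' u v, u ∈ F z → v ∈ F z' → 0 ≤ (u - v) ⬝ᵥ (z - z'))
    (hclosed : ∀ z, IsClosed (F z)) (hconvex : ∀ z, Convex ℝ (F z))
    (zstar : Fin d → ℝ) (hzstar : (0 : Fin d → ℝ) ∈ F zstar)
    (z : ℕ → Fin d → ℝ)
    (hstep : ∀ i, P.mulVec (z i - z (i+1)) ∈ F (z (i+1))) :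
    ∀ k : ℕ, 1 ≤ k → distSqTo P⁻¹ (F (z k)) ≤ (1 / (k : ℝ)) * qf P (z 0 - zstar) := by
  have hdet : IsUnit P.det := isUnit_iff_ne_zero.mpr (ne_of_gt hP.det_pos)
  have hPinv : (P⁻¹).PosDef := hP.inv
  -- symmetry of the bilinear form
  have hsym : ∀ x y : Fin d → ℝ, x ⬝ᵥ P.mulVec y = y ⬝ᵥ P.mulVec x := by
    intro x y
    rw [Matrix.dotProduct_mulVec, ← Matrix.mulVec_transpose,
      show Pᵀ = P from by simpa using hP.isHermitian.eq, dotProduct_comm]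
  -- nonnegativity of the quadratic forms
  have hq0 : ∀ v : Fin d → ℝ, 0 ≤ qf P v := by
    intro v; simpa [qf] using hP.posSemidef.dotProduct_mulVec_nonneg v
  have hq0' : ∀ v : Fin d → ℝ, 0 ≤ qf P⁻¹ v := by
    intro v; simpa [qf] using hPinv.posSemidef.dotProduct_mulVec_nonneg v
  -- expansion of the quadratic form of a difference
  have hexp : ∀ x y : Fin d → ℝ,
      qf P (x - y) = qf P x - 2 * (x ⬝ᵥ P.mulVec y) + qf P y := by
    intro x y
    simp only [qf, Matrix.mulVec_sub, sub_dotProduct, dotProduct_sub]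
    rw [hsym y x]; ring
  set g : ℕ → ℝ := fun i => qf P (z i - z (i+1)) with hg
  set C : ℝ := qf P (z 0 - zstar) with hC
  -- telescoping step
  have key1 : ∀ i, g i ≤ qf P (z i - zstar) - qf P (z (i+1) - zstar) := by
    intro i
    have h := hmono (z (i+1)) zstar _ 0 (hstep i) hzstar
    set a := z i - zstar with ha
    set b := z (i+1) - zstar with hb
    have hab : z i - z (i+1) = a - b := by rw [ha, hb]; abel
    have h' : 0 ≤ (a - b) ⬝ᵥ P.mulVec b := by
      have : 0 ≤ (P.mulVec (a - b)) ⬝ᵥ b := by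
        simpa [hab, ← hb] using h
      rwa [dotProduct_comm, hsym b (a - b)] at this
    have hexp' : qf P (a - b) = qf P a - 2 * (a ⬝ᵥ P.mulVec b) + qf P b := hexp a b
    have hbb : qf P b = b ⬝ᵥ P.mulVec b := rfl
    have h'' : b ⬝ᵥ P.mulVec b ≤ a ⬝ᵥ P.mulVec b := by
      have := h'
      simp only [sub_dotProduct] at this
      linarith
    have : g i = qf P (a - b) := by rw [hg]; simp only [hab]
    rw [this, hexp']
    linarith [hbb]
  -- monotone decay
  have key2 : ∀ i, g (i+1) ≤ g i := by
    intro i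
    have h := hmono (z (i+2)) (z (i+1)) _ _ (hstep (i+1)) (hstep i)
    set a := z i - z (i+1) with ha
    set b := z (i+1) - z (i+2) with hb
    have h1 : 0 ≤ (P.mulVec (b - a)) ⬝ᵥ (-b) := by
      rw [show z (i+2) - z (i+1) = -b from by rw [hb]; abel,
        ← Matrix.mulVec_sub] at h
      exact h
    have h2 : b ⬝ᵥ P.mulVec b ≤ a ⬝ᵥ P.mulVec b := by
      have : (b - a) ⬝ᵥ P.mulVec b ≤ 0 := by
        have := h1
        rw [dotProduct_neg, dotProduct_comm, hsym b (b - a)] at this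
        linarith
      simp only [sub_dotProduct] at this
      linarith
    have h3 : 0 ≤ qf P (a - b) := hq0 (a - b)
    rw [hexp a b] at h3
    have hbb : qf P b = b ⬝ᵥ P.mulVec b := rfl
    have hga : g i = qf P a := rfl
    have hgb : g (i+1) = qf P b := rfl
    rw [hga, hgb]
    linarith [hbb]
  have gmono : ∀ i j, i ≤ j → g j ≤ g i := by
    intro i j hij
    induction j, hij using Nat.le_induction with
    | base => exact le_rfl
    | succ n hn ih => exact le_trans (key2 n) ih
  -- telescoping sum
  have tel : ∀ k, ∑ i ∈ Finset.range k, g i ≤ C - qf P (z k - zstar) := by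
    intro k
    induction k with
    | zero => simp [hC]
    | succ n ih =>
      rw [Finset.sum_range_succ]
      have := key1 n
      linarith
  intro k hk
  obtain ⟨m, rfl⟩ : ∃ m, k = m + 1 := ⟨k - 1, (Nat.succ_pred_eq_of_pos hk).symm⟩
  set k := m + 1
  have hkpos : (0:ℝ) < (k : ℝ) := by positivity
  -- k * g m ≤ sum ≤ C
  have hcard : (Finset.range k).card • g m ≤ ∑ i ∈ Finset.range k, g i := by
    apply Finset.card_nsmul_le_sum
    intro i hi
    exact gmono i m (Nat.lt_succ_iff.mp (Finset.mem_range.mp hi))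
  have hsum : (k : ℝ) * g m ≤ C := by
    have h1 : (k : ℝ) * g m ≤ ∑ i ∈ Finset.range k, g i := by
      simpa [nsmul_eq_mul, Finset.card_range] using hcard
    have h2 : ∑ i ∈ Finset.range k, g i ≤ C := le_trans (tel k) (by linarith [hq0 (z k - zstar)])
    linarith
  have hgm : g m ≤ (1 / (k : ℝ)) * C := by
    rw [div_mul_eq_mul_div, one_mul, le_div_iff₀ hkpos]
    linarith [hsum]
  -- the distance is at most qf P⁻¹ of the chosen element
  have hinv : ∀ v : Fin d → ℝ, qf P⁻¹ (P.mulVec v) = qf P v := by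
    intro v
    have e : P⁻¹.mulVec (P.mulVec v) = v := by
      rw [Matrix.mulVec_mulVec, Matrix.nonsing_inv_mul P hdet, Matrix.one_mulVec]
    rw [qf, e, dotProduct_comm]; rfl
  have hmem : qf P⁻¹ (P.mulVec (z m - z k)) ∈ qf P⁻¹ '' F (z k) :=
    ⟨P.mulVec (z m - z k), hstep m, rfl⟩
  have hbdd : BddBelow (qf P⁻¹ '' F (z k)) := by
    refine ⟨0, ?_⟩
    rintro x ⟨v, -, rfl⟩
    exact hq0' v
  calc distSqTo P⁻¹ (F (z k)) ≤ qf P⁻¹ (P.mulVec (z m - z k)) := csInf_le hbdd hmem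
    _ = g m := by rw [hinv]
    _ ≤ (1 / (k : ℝ)) * C := hgm
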